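/- Let s ∈ [−1,1]^n with L·s ≠ 0, let 0 < ε < 1/2, and let q ∈ ℝ^n satisfy ‖q − (I + L)^{−1} s‖_{I+L} ≤ δ·‖(I + L)^{−1} s‖_{I+L} for some δ with 0 < δ ≤ ε·‖L s‖₂/(12·√2·n³). Then (1 − ε)·‖L (I + L)^{−1} s‖₂² ≤ ‖L q‖₂² ≤ (1 + ε)·‖L (I + L)^{−1} s‖₂². -/

import Mathlib

open Matrix

/-- The norm of a vector `x` with respect to a matrix `K`: `‖x‖_K = √(xᵀ K x)`. -/
noncomputable def matNorm {m : Type*} [Fintype m] (K : Matrix m m ℝ) (x : m → ℝ) : ℝ :=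
  Real.sqrt (x ⬝ᵥ K *ᵥ x)

noncomputable def vnorm {n : ℕ} (v : Fin n → ℝ) : ℝ := Real.sqrt (∑ i, v i ^ 2)

lemma vnorm_def {n : ℕ} (v : Fin n → ℝ) : vnorm v = Real.sqrt (∑ i, v i ^ 2) := rfl

lemma vnorm_nonneg' {n : ℕ} (v : Fin n → ℝ) : 0 ≤ vnorm v := Real.sqrt_nonneg _

lemma sq_vnorm {n : ℕ} (v : Fin n → ℝ) : vnorm v ^ 2 = ∑ i, v i ^ 2 :=
  Real.sq_sqrt (Finset.sum_nonneg fun _ _ => sq_nonneg _)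

lemma dot_le_vnorm {n : ℕ} (u v : Fin n → ℝ) : u ⬝ᵥ v ≤ vnorm u * vnorm v := by
  have h := Finset.sum_mul_sq_le_sq_mul_sq Finset.univ u v
  have h2 : (u ⬝ᵥ v) ^ 2 ≤ (vnorm u * vnorm v) ^ 2 := by
    rw [mul_pow, sq_vnorm, sq_vnorm]; exact h
  calc u ⬝ᵥ v ≤ |u ⬝ᵥ v| := le_abs_self _
    _ = Real.sqrt ((u ⬝ᵥ v) ^ 2) := (Real.sqrt_sq_eq_abs _).symm
    _ ≤ Real.sqrt ((vnorm u * vnorm v) ^ 2) := Real.sqrt_le_sqrt h2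
    _ = vnorm u * vnorm v := Real.sqrt_sq (mul_nonneg (vnorm_nonneg' _) (vnorm_nonneg' _))

lemma vnorm_add_le {n : ℕ} (u v : Fin n → ℝ) : vnorm (u + v) ≤ vnorm u + vnorm v := by
  have expand : ∑ i, (u i + v i) ^ 2 = (∑ i, u i ^ 2) + 2 * (u ⬝ᵥ v) + ∑ i, v i ^ 2 := by
    simp only [dotProduct, Finset.mul_sum, ← Finset.sum_add_distrib]
    exact Finset.sum_congr rfl fun i _ => by ring
  have h : ∑ i, (u i + v i) ^ 2 ≤ (vnorm u + vnorm v) ^ 2 := by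
    have := dot_le_vnorm u v
    rw [expand, ← sq_vnorm u, ← sq_vnorm v]; nlinarith
  calc vnorm (u + v) = Real.sqrt (∑ i, (u i + v i) ^ 2) := by simp [vnorm]
    _ ≤ Real.sqrt ((vnorm u + vnorm v) ^ 2) := Real.sqrt_le_sqrt h
    _ = vnorm u + vnorm v := Real.sqrt_sq (add_nonneg (vnorm_nonneg' _) (vnorm_nonneg' _))

lemma vnorm_sub_le {n : ℕ} (u v : Fin n → ℝ) : vnorm (u - v) ≤ vnorm u + vnorm v := by
  have := vnorm_add_le u (-v)
  have hnv : vnorm (-v) = vnorm v := by simp [vnorm]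
  rw [hnv] at this
  simpa [sub_eq_add_neg] using this

lemma L_expand {n : ℕ} (A : Matrix (Fin n) (Fin n) ℝ) (v : Fin n → ℝ) :
    v ⬝ᵥ ((Matrix.diagonal fun i => ∑ j, |A i j|) - A) *ᵥ v
      = ∑ i, ∑ j, (|A i j| * v i ^ 2 - A i j * (v i * v j)) := by
  rw [Matrix.sub_mulVec, dotProduct_sub]
  have h1 : v ⬝ᵥ (Matrix.diagonal fun i => ∑ j, |A i j|) *ᵥ v
      = ∑ i, ∑ j, |A i j| * v i ^ 2 := by
    simp only [dotProduct, Matrix.mulVec_diagonal]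
    exact Finset.sum_congr rfl fun i _ => by
      rw [show v i * ((∑ j, |A i j|) * v i) = (∑ j, |A i j|) * v i ^ 2 from by ring,
        Finset.sum_mul]
  have h2 : v ⬝ᵥ A *ᵥ v = ∑ i, ∑ j, A i j * (v i * v j) := by
    simp only [dotProduct, Matrix.mulVec, dotProduct, Finset.mul_sum]
    exact Finset.sum_congr rfl fun i _ => Finset.sum_congr rfl fun j _ => by ring
  rw [h1, h2, ← Finset.sum_sub_distrib]
  exact Finset.sum_congr rfl fun i _ => by rw [← Finset.sum_sub_distrib]

lemma L_psd {n : ℕ} (A : Matrix (Fin n) (Fin n) ℝ) (hAsymm : A.IsSymm)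
    (hAval : ∀ i j, A i j = -1 ∨ A i j = 0 ∨ A i j = 1) (v : Fin n → ℝ) :
    0 ≤ v ⬝ᵥ ((Matrix.diagonal fun i => ∑ j, |A i j|) - A) *ᵥ v := by
  rw [L_expand]
  set f : Fin n → Fin n → ℝ := fun i j => |A i j| * v i ^ 2 - A i j * (v i * v j) with hf
  have key : ∀ i j, 0 ≤ f i j + f j i := by
    intro i j
    have hji : A j i = A i j := hAsymm.apply i j
    simp only [hf, hji]
    rcases hAval i j with h | h | h <;> rw [h] <;>
      [skip; skip; skip] <;> simp <;> nlinarith [sq_nonneg (v i - v j), sq_nonneg (v i + v j)]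
  have hsum : (∑ i, ∑ j, f i j) + (∑ i, ∑ j, f i j) = ∑ i, ∑ j, (f i j + f j i) := by
    nth_rewrite 2 [Finset.sum_comm]
    rw [← Finset.sum_add_distrib]
    exact Finset.sum_congr rfl fun i _ => (Finset.sum_add_distrib).symm
  have : 0 ≤ (∑ i, ∑ j, f i j) + (∑ i, ∑ j, f i j) := by
    rw [hsum]
    exact Finset.sum_nonneg fun i _ => Finset.sum_nonneg fun j _ => key i j
  linarith

lemma vnorm_le_of_sq {n : ℕ} (v : Fin n → ℝ) (c : ℝ) (hc : 0 ≤ c)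
    (h : ∑ i, v i ^ 2 ≤ c ^ 2) : vnorm v ≤ c := by
  calc vnorm v ≤ Real.sqrt (c ^ 2) := Real.sqrt_le_sqrt h
    _ = c := Real.sqrt_sq hc

lemma vnorm_A_le {n : ℕ} (A : Matrix (Fin n) (Fin n) ℝ)
    (hAval : ∀ i j, A i j = -1 ∨ A i j = 0 ∨ A i j = 1) (v : Fin n → ℝ) :
    vnorm (A *ᵥ v) ≤ n * vnorm v := by
  apply vnorm_le_of_sq _ _ (mul_nonneg (Nat.cast_nonneg n) (vnorm_nonneg' v))
  have hrow : ∀ i, ((A *ᵥ v) i) ^ 2 ≤ n * ∑ j, v j ^ 2 := by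
    intro i
    have h := Finset.sum_mul_sq_le_sq_mul_sq Finset.univ (A i) v
    have hA2 : ∑ j, (A i j) ^ 2 ≤ (n : ℝ) := by
      calc ∑ j, (A i j) ^ 2 ≤ ∑ _j : Fin n, (1 : ℝ) := by
            apply Finset.sum_le_sum
            intro j _
            rcases hAval i j with h' | h' | h' <;> rw [h'] <;> norm_num
        _ = n := by simp
    calc ((A *ᵥ v) i) ^ 2 = (∑ j, A i j * v j) ^ 2 := by rfl
      _ ≤ (∑ j, (A i j) ^ 2) * ∑ j, v j ^ 2 := h
      _ ≤ n * ∑ j, v j ^ 2 := by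
          apply mul_le_mul_of_nonneg_right hA2
          exact Finset.sum_nonneg fun _ _ => sq_nonneg _
  calc ∑ i, ((A *ᵥ v) i) ^ 2 ≤ ∑ _i : Fin n, ((n : ℝ) * ∑ j, v j ^ 2) :=
        Finset.sum_le_sum fun i _ => hrow i
    _ = n * (n * ∑ j, v j ^ 2) := by simp [Finset.mul_sum]
    _ = (n * vnorm v) ^ 2 := by rw [mul_pow, sq_vnorm]; ring

lemma vnorm_D_le {n : ℕ} (A : Matrix (Fin n) (Fin n) ℝ)
    (hAval : ∀ i j, A i j = -1 ∨ A i j = 0 ∨ A i j = 1) (v : Fin n → ℝ) :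
    vnorm ((Matrix.diagonal fun i => ∑ j, |A i j|) *ᵥ v) ≤ n * vnorm v := by
  apply vnorm_le_of_sq _ _ (mul_nonneg (Nat.cast_nonneg n) (vnorm_nonneg' v))
  have hd : ∀ i, 0 ≤ (∑ j, |A i j|) ∧ (∑ j, |A i j|) ≤ n := by
    intro i
    constructor
    · exact Finset.sum_nonneg fun _ _ => abs_nonneg _
    · calc ∑ j, |A i j| ≤ ∑ _j : Fin n, (1 : ℝ) := by
            apply Finset.sum_le_sum
            intro j _
            rcases hAval i j with h' | h' | h' <;> rw [h'] <;> norm_num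
        _ = n := by simp
  calc ∑ i, (((Matrix.diagonal fun i => ∑ j, |A i j|) *ᵥ v) i) ^ 2
      = ∑ i, ((∑ j, |A i j|) * v i) ^ 2 := by
        exact Finset.sum_congr rfl fun i _ => by rw [Matrix.mulVec_diagonal]
    _ ≤ ∑ i, (n : ℝ) ^ 2 * v i ^ 2 := by
        apply Finset.sum_le_sum
        intro i _
        rw [mul_pow]
        apply mul_le_mul_of_nonneg_right _ (sq_nonneg _)
        exact pow_le_pow_left₀ (hd i).1 (hd i).2 2
    _ = (n * vnorm v) ^ 2 := by rw [← Finset.mul_sum, mul_pow, sq_vnorm]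


lemma arith_endgame (n : ℕ) (hn1 : (1:ℝ) ≤ (n:ℝ)) (ε δ a b t E rn : ℝ)
    (hε : 0 < ε) (hε' : ε < 1/2) (hδ : 0 < δ)
    (ha0 : 0 ≤ a) (hb0 : 0 ≤ b) (ht0 : 0 ≤ t) (hE0 : 0 ≤ E)
    (hrn : rn ≤ (n:ℝ)) (hrn0 : 0 ≤ rn)
    (hδ' : δ ≤ ε * E / (12 * Real.sqrt 2 * (n:ℝ)^3))
    (ht : t ≤ 2 * (n:ℝ) * (δ * rn))
    (hE : E ≤ (1 + 2*(n:ℝ)) * a)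
    (tri1 : b ≤ a + t) (tri2 : a ≤ b + t) :
    (1 - ε) * a^2 ≤ b^2 ∧ b^2 ≤ (1+ε) * a^2 := by
  have hsq2 : Real.sqrt 2 ^ 2 = 2 := Real.sq_sqrt (by norm_num)
  have hsq2_pos : 0 < Real.sqrt 2 := Real.sqrt_pos.mpr (by norm_num)
  set sq2 := Real.sqrt 2 with hsq2_def
  clear_value sq2
  have hsq2_ge : (1.41 : ℝ) ≤ sq2 := by nlinarith
  have hsq2_le : sq2 ≤ (1.5 : ℝ) := by nlinarith
  have hnpos : (0:ℝ) < (n:ℝ) := lt_of_lt_of_le one_pos hn1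
  have hδ2 : δ * (12 * sq2 * (n : ℝ) ^ 3) ≤ ε * E := by
    have hc : 0 < 12 * sq2 * (n : ℝ) ^ 3 := by positivity
    exact (le_div_iff₀ hc).mp hδ'
  have hkey : t * (2 * sq2) ≤ ε * a := by
    have h2 : ε * E ≤ ε * ((1 + 2 * (n:ℝ)) * a) := mul_le_mul_of_nonneg_left hE hε.le
    have h3 : δ * (12 * sq2 * (n : ℝ) ^ 3) ≤ ε * ((1 + 2 * (n:ℝ)) * a) := le_trans hδ2 h2
    have h5 : ε * ((1 + 2 * (n:ℝ)) * a) ≤ ε * (3 * (n:ℝ) * a) := by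
      apply mul_le_mul_of_nonneg_left _ hε.le
      have := mul_le_mul_of_nonneg_right hn1 ha0
      linarith
    have h6 : δ * (12 * sq2 * (n : ℝ) ^ 3) ≤ ε * (3 * (n:ℝ) * a) := le_trans h3 h5
    have h7 : (4 * sq2 * δ * (n:ℝ)^2) * (3 * (n:ℝ)) ≤ (ε * a) * (3 * (n:ℝ)) := by
      calc (4 * sq2 * δ * (n:ℝ)^2) * (3 * (n:ℝ)) = δ * (12 * sq2 * (n : ℝ) ^ 3) := by ring
        _ ≤ ε * (3 * (n:ℝ) * a) := h6
        _ = (ε * a) * (3 * (n:ℝ)) := by ring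
    have hstep2 : 4 * sq2 * δ * (n:ℝ)^2 ≤ ε * a :=
      le_of_mul_le_mul_right h7 (by positivity)
    have hstep1 : 2 * (n : ℝ) * (δ * rn) * (2 * sq2) ≤ 4 * sq2 * δ * (n:ℝ)^2 := by
      have h8 := mul_le_mul_of_nonneg_left hrn
        (by positivity : (0:ℝ) ≤ 4 * sq2 * δ * (n:ℝ))
      calc 2 * (n : ℝ) * (δ * rn) * (2 * sq2)
          = 4 * sq2 * δ * (n:ℝ) * rn := by ring
        _ ≤ 4 * sq2 * δ * (n:ℝ) * (n:ℝ) := h8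
        _ = 4 * sq2 * δ * (n:ℝ)^2 := by ring
    calc t * (2 * sq2) ≤ 2 * (n:ℝ) * (δ * rn) * (2 * sq2) := by
          apply mul_le_mul_of_nonneg_right ht (by positivity)
      _ ≤ ε * a := le_trans hstep1 hstep2
  have h8t : 8 * t ^ 2 ≤ ε ^ 2 * a ^ 2 := by
    have h0 : (0:ℝ) ≤ t * (2 * sq2) := mul_nonneg ht0 (by positivity)
    have h := mul_self_le_mul_self h0 hkey
    have e1 : (t * (2 * sq2)) * (t * (2 * sq2)) = 4 * sq2 ^ 2 * t ^ 2 := by ring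
    have e2 : 4 * sq2 ^ 2 * t ^ 2 = 8 * t ^ 2 := by rw [hsq2]; ring
    have e3 : (ε * a) * (ε * a) = ε ^ 2 * a ^ 2 := by ring
    rw [e1, e3] at h
    rw [e2] at h
    exact h
  have h2at : 1.41 * (2 * (t * a)) ≤ ε * a ^ 2 := by
    have f1 := mul_le_mul_of_nonneg_right hkey ha0
    have f2 := mul_le_mul_of_nonneg_right hsq2_ge (mul_nonneg ht0 ha0)
    have e1 : t * (2 * sq2) * a = 2 * (sq2 * (t * a)) := by ring
    have e2 : ε * a * a = ε * a ^ 2 := by ring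
    rw [e1, e2] at f1
    linarith
  have h9 : ε ^ 2 * a ^ 2 ≤ (1 / 2) * (ε * a ^ 2) := by
    have f := mul_nonneg (mul_nonneg hε.le (sq_nonneg a)) (by linarith : (0:ℝ) ≤ 1 / 2 - ε)
    have e : ε * a ^ 2 * (1 / 2 - ε) = (1 / 2) * (ε * a ^ 2) - ε ^ 2 * a ^ 2 := by ring
    rw [e] at f
    linarith
  have hεa2 : 0 ≤ ε * a ^ 2 := mul_nonneg hε.le (sq_nonneg a)
  have hta : 0 ≤ t * a := mul_nonneg ht0 ha0
  have hfinal2 : b ^ 2 ≤ (1 + ε) * a ^ 2 := by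
    have hb2 : b * b ≤ (a + t) * (a + t) := mul_self_le_mul_self hb0 tri1
    have e1 : b * b = b ^ 2 := sq b ▸ rfl
    have e2 : (a + t) * (a + t) = a ^ 2 + 2 * (t * a) + t ^ 2 := by ring
    rw [e1, e2] at hb2
    have e4 : (1 + ε) * a ^ 2 = a ^ 2 + ε * a ^ 2 := by ring
    rw [e4]
    linarith [hb2, h8t, h2at, h9, sq_nonneg t]
  have hfinal1 : (1 - ε) * a ^ 2 ≤ b ^ 2 := by
    have htle : t ≤ a := by
      have g1 := mul_le_mul_of_nonneg_right hsq2_ge ht0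
      have g2 := mul_le_mul_of_nonneg_right hε'.le ha0
      have e1 : t * (2 * sq2) = 2 * (sq2 * t) := by ring
      rw [e1] at hkey
      linarith
    have hb2 : (a - t) * (a - t) ≤ b * b :=
      mul_self_le_mul_self (by linarith) (by linarith)
    have e1 : b * b = b ^ 2 := sq b ▸ rfl
    have e2 : (a - t) * (a - t) = a ^ 2 - 2 * (t * a) + t ^ 2 := by ring
    rw [e1, e2] at hb2
    have e4 : (1 - ε) * a ^ 2 = a ^ 2 - ε * a ^ 2 := by ring
    rw [e4]
    linarith [hb2, h2at, sq_nonneg t]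
  exact ⟨hfinal1, hfinal2⟩

theorem stmt_15 (n : ℕ) (hn : 1 ≤ n) (A : Matrix (Fin n) (Fin n) ℝ)
    (hAsymm : A.IsSymm) (hAdiag : ∀ i, A i i = 0)
    (hAval : ∀ i j, A i j = -1 ∨ A i j = 0 ∨ A i j = 1)
    (D L : Matrix (Fin n) (Fin n) ℝ)
    (hD : D = Matrix.diagonal fun i => ∑ j, |A i j|)
    (hL : L = D - A)
    (s : Fin n → ℝ) (hs : ∀ i, s i ∈ Set.Icc (-1 : ℝ) 1)
    (hLs : L *ᵥ s ≠ 0)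
    (ε : ℝ) (hε : 0 < ε) (hε' : ε < 1 / 2)
    (δ : ℝ) (hδ : 0 < δ)
    (hδ' : δ ≤ ε * Real.sqrt (∑ i, ((L *ᵥ s) i) ^ 2) /
      (12 * Real.sqrt 2 * (n : ℝ) ^ 3))
    (q : Fin n → ℝ)
    (hq : matNorm (1 + L) (q - (1 + L)⁻¹ *ᵥ s) ≤
      δ * matNorm (1 + L) ((1 + L)⁻¹ *ᵥ s)) :
    (1 - ε) * ∑ i, ((L *ᵥ ((1 + L)⁻¹ *ᵥ s)) i) ^ 2 ≤ ∑ i, ((L *ᵥ q) i) ^ 2 ∧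
    ∑ i, ((L *ᵥ q) i) ^ 2 ≤ (1 + ε) * ∑ i, ((L *ᵥ ((1 + L)⁻¹ *ᵥ s)) i) ^ 2 := by
  subst hD hL
  set A' := Matrix.diagonal (fun i => ∑ j, |A i j|) - A with hA'
  -- basic facts
  have hn1 : (1 : ℝ) ≤ (n : ℝ) := by exact_mod_cast hn
  have hpsd : ∀ v : Fin n → ℝ, 0 ≤ v ⬝ᵥ A' *ᵥ v := L_psd A hAsymm hAval
  have hdotsq : ∀ w : Fin n → ℝ, w ⬝ᵥ w = ∑ i, w i ^ 2 := by
    intro w; simp [dotProduct, sq]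
  have hMv : ∀ w : Fin n → ℝ, (1 + A') *ᵥ w = w + A' *ᵥ w := by
    intro w; rw [Matrix.add_mulVec, Matrix.one_mulVec]
  have hMdot : ∀ w : Fin n → ℝ, w ⬝ᵥ (1 + A') *ᵥ w = (∑ i, w i ^ 2) + w ⬝ᵥ A' *ᵥ w := by
    intro w; rw [hMv, dotProduct_add, hdotsq]
  have hMdot_nonneg : ∀ w : Fin n → ℝ, 0 ≤ w ⬝ᵥ (1 + A') *ᵥ w := by
    intro w; rw [hMdot]
    have := hpsd w
    have h2 : 0 ≤ ∑ i, w i ^ 2 := Finset.sum_nonneg fun _ _ => sq_nonneg _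
    linarith
  -- positive definiteness of 1 + A'
  have hherm : (1 + A').IsHermitian := by
    rw [Matrix.IsHermitian, Matrix.conjTranspose_eq_transpose_of_trivial]
    exact (Matrix.isSymm_one.add ((Matrix.isSymm_diagonal _).sub hAsymm)).eq
  have hposdef : (1 + A').PosDef := by
    refine Matrix.PosDef.of_dotProduct_mulVec_pos hherm fun x hx => ?_
    have hsx : star x = x := by simp
    rw [hsx, hMdot]
    have hxx : x ⬝ᵥ x ≠ 0 := fun h => hx (dotProduct_self_eq_zero.mp h)
    have hxx0 : (0:ℝ) ≤ x ⬝ᵥ x := by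
      rw [hdotsq]; exact Finset.sum_nonneg fun _ _ => sq_nonneg _
    have h1 : 0 < ∑ i, x i ^ 2 := by
      rw [← hdotsq]; exact lt_of_le_of_ne hxx0 (Ne.symm hxx)
    linarith [hpsd x]
  have hdet : IsUnit (1 + A').det := isUnit_iff_ne_zero.mpr hposdef.det_pos.ne'
  set x := (1 + A')⁻¹ *ᵥ s with hx_def
  have hMx : (1 + A') *ᵥ x = s := by
    rw [hx_def, Matrix.mulVec_mulVec, Matrix.mul_nonsing_inv _ hdet, Matrix.one_mulVec]
  -- the error vector
  set e := q - x with he_def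
  have hq_eq : q = x + e := by rw [he_def]; abel
  -- matNorm facts
  have hmatsq : ∀ w : Fin n → ℝ, matNorm (1 + A') w ^ 2 = w ⬝ᵥ (1 + A') *ᵥ w := by
    intro w; exact Real.sq_sqrt (hMdot_nonneg w)
  have hvnorm_le_mat : ∀ w : Fin n → ℝ, vnorm w ≤ matNorm (1 + A') w := by
    intro w
    apply Real.sqrt_le_sqrt
    rw [hMdot]
    linarith [hpsd w]
  -- bound on matNorm of x
  have hxs : x ⬝ᵥ (1 + A') *ᵥ x = x ⬝ᵥ s := by rw [hMx]
  have hens : vnorm s ^ 2 ≤ (n : ℝ) := by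
    rw [sq_vnorm]
    calc ∑ i, s i ^ 2 ≤ ∑ _i : Fin n, (1 : ℝ) := by
          apply Finset.sum_le_sum
          intro i _
          have h1 := (hs i).1; have h2 := (hs i).2
          nlinarith
      _ = n := by simp
  have henx : vnorm x ≤ vnorm s := by
    have h1 : vnorm x ^ 2 ≤ vnorm x * vnorm s := by
      rw [sq_vnorm, ← hdotsq]
      calc x ⬝ᵥ x ≤ x ⬝ᵥ (1 + A') *ᵥ x := by rw [hMdot, hdotsq]; linarith [hpsd x]
        _ = x ⬝ᵥ s := hxs
        _ ≤ vnorm x * vnorm s := dot_le_vnorm x s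
    have hex := vnorm_nonneg' x
    have hes := vnorm_nonneg' s
    nlinarith
  have hmatx : matNorm (1 + A') x ≤ Real.sqrt n := by
    apply Real.sqrt_le_sqrt
    calc x ⬝ᵥ (1 + A') *ᵥ x = x ⬝ᵥ s := hxs
      _ ≤ vnorm x * vnorm s := dot_le_vnorm x s
      _ ≤ vnorm s * vnorm s := by
          apply mul_le_mul_of_nonneg_right henx (vnorm_nonneg' s)
      _ = vnorm s ^ 2 := (sq _).symm
      _ ≤ n := hens
  -- operator norm bound
  have hop : ∀ v : Fin n → ℝ, vnorm (A' *ᵥ v) ≤ 2 * n * vnorm v := by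
    intro v
    rw [hA', Matrix.sub_mulVec]
    calc vnorm ((Matrix.diagonal fun i => ∑ j, |A i j|) *ᵥ v - A *ᵥ v)
        ≤ vnorm ((Matrix.diagonal fun i => ∑ j, |A i j|) *ᵥ v) + vnorm (A *ᵥ v) :=
          vnorm_sub_le _ _
      _ ≤ n * vnorm v + n * vnorm v := add_le_add (vnorm_D_le A hAval v) (vnorm_A_le A hAval v)
      _ = 2 * n * vnorm v := by ring
  -- bound on vnorm (A' *ᵥ e)
  have he_mat : matNorm (1 + A') e ≤ δ * matNorm (1 + A') x := hq
  have hmatx_nonneg : 0 ≤ matNorm (1 + A') x := Real.sqrt_nonneg _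
  have hLe_bound : vnorm (A' *ᵥ e) ≤ 2 * n * (δ * Real.sqrt n) := by
    calc vnorm (A' *ᵥ e) ≤ 2 * n * vnorm e := hop e
      _ ≤ 2 * n * matNorm (1 + A') e := by
          apply mul_le_mul_of_nonneg_left (hvnorm_le_mat e) (by positivity)
      _ ≤ 2 * n * (δ * matNorm (1 + A') x) := by
          apply mul_le_mul_of_nonneg_left he_mat (by positivity)
      _ ≤ 2 * n * (δ * Real.sqrt n) := by
          apply mul_le_mul_of_nonneg_left _ (by positivity)
          exact mul_le_mul_of_nonneg_left hmatx hδ.le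
  -- relate L s to L x
  have hLs_eq : A' *ᵥ s = A' *ᵥ x + A' *ᵥ (A' *ᵥ x) := by
    conv_lhs => rw [← hMx, hMv, Matrix.mulVec_add]
  have hLs_le : vnorm (A' *ᵥ s) ≤ (1 + 2 * n) * vnorm (A' *ᵥ x) := by
    rw [hLs_eq]
    calc vnorm (A' *ᵥ x + A' *ᵥ (A' *ᵥ x)) ≤ vnorm (A' *ᵥ x) + vnorm (A' *ᵥ (A' *ᵥ x)) :=
          vnorm_add_le _ _
      _ ≤ vnorm (A' *ᵥ x) + 2 * n * vnorm (A' *ᵥ x) := by linarith [hop (A' *ᵥ x)]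
      _ = (1 + 2 * n) * vnorm (A' *ᵥ x) := by ring
  -- abbreviations
  set a := vnorm (A' *ᵥ x) with ha_def
  set b := vnorm (A' *ᵥ q) with hb_def
  set t := vnorm (A' *ᵥ e) with ht_def
  have ha0 : 0 ≤ a := vnorm_nonneg' _
  have hb0 : 0 ≤ b := vnorm_nonneg' _
  have ht0 : 0 ≤ t := vnorm_nonneg' _
  have hga : ∑ i, ((A' *ᵥ x) i) ^ 2 = a ^ 2 := (sq_vnorm _).symm
  have hgb : ∑ i, ((A' *ᵥ q) i) ^ 2 = b ^ 2 := (sq_vnorm _).symm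
  have hLq_eq : A' *ᵥ q = A' *ᵥ x + A' *ᵥ e := by
    conv_lhs => rw [hq_eq, Matrix.mulVec_add]
  have tri1 : b ≤ a + t := by rw [hb_def, hLq_eq]; exact vnorm_add_le _ _
  have tri2 : a ≤ b + t := by
    have hxe : A' *ᵥ x = A' *ᵥ q - A' *ᵥ e := by rw [hLq_eq]; abel
    rw [ha_def, hxe]; exact vnorm_sub_le _ _
  have hsqn : Real.sqrt n ≤ (n : ℝ) := by
    calc Real.sqrt n ≤ Real.sqrt ((n : ℝ) ^ 2) :=
          Real.sqrt_le_sqrt (le_self_pow₀ hn1 two_ne_zero)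
      _ = (n : ℝ) := Real.sqrt_sq (by positivity)
  have hsqn0 : 0 ≤ Real.sqrt n := Real.sqrt_nonneg _
  rw [hga, hgb]
  rw [← vnorm_def] at hδ'
  exact arith_endgame n hn1 ε δ a b t (vnorm (A' *ᵥ s)) (Real.sqrt n) hε hε' hδ
    ha0 hb0 ht0 (vnorm_nonneg' _) hsqn hsqn0 hδ' hLe_bound hLs_le tri1 tri2
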